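/- Let r be a real number and let (p_m, q_m)_{m≥1} be integers with p_m ≥ 2, q_m ≥ 1 and 0 < |r·p_m − q_m| < p_m^{−m} for all m ≥ 1, and set λ_m := r·p_m − q_m. Define X : ℝ → ℝ³ by X(t) = (r·t, t, x₃(t)) where x₃(t) := ∑_{m=1}^∞ (m/(2π·p_m^m·λ_m))·sin(2π·λ_m·t). Then X(0) = 0 and X satisfies the differential equation X'(t) = h(X(t)) for all t, where h(z₁, z₂, z₃) = (r, 1, ∑_{m=1}^∞ m·p_m^{−m}·cos(2π(p_m·z₁ − q_m·z₂))). -/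

import Mathlib

open Real

/-- With `λ_m = r p_m − q_m`, `X(t) = (r t, t, x₃(t))` where
`x₃(t) = ∑_{m≥1} (m/(2π p_m^m λ_m)) sin(2π λ_m t)`, one has `X(0) = 0` and `X' = h ∘ X`,
where `h(z₁, z₂, z₃) = (r, 1, ∑_{m≥1} m p_m^{−m} cos(2π(p_m z₁ − q_m z₂)))`. -/
theorem stmt9 (r : ℝ) (p q : ℕ → ℤ)
    (hp : ∀ m : ℕ, 1 ≤ m → 2 ≤ p m) (hq : ∀ m : ℕ, 1 ≤ m → 1 ≤ q m)
    (happrox : ∀ m : ℕ, 1 ≤ m →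
      0 < |r * (p m : ℝ) - (q m : ℝ)| ∧
      |r * (p m : ℝ) - (q m : ℝ)| < (((p m : ℝ)) ^ m)⁻¹)
    (X : ℝ → ℝ × ℝ × ℝ)
    (hX : ∀ t : ℝ, X t = (r * t, t,
      ∑' m : ℕ, (m : ℝ) / (2 * π * ((p m : ℝ)) ^ m * (r * (p m : ℝ) - (q m : ℝ))) *
        Real.sin (2 * π * (r * (p m : ℝ) - (q m : ℝ)) * t)))
    (h : ℝ × ℝ × ℝ → ℝ × ℝ × ℝ)
    (hh : ∀ z : ℝ × ℝ × ℝ, h z =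
      (r, 1, ∑' m : ℕ, (m : ℝ) * (((p m : ℝ)) ^ m)⁻¹ *
        Real.cos (2 * π * ((p m : ℝ) * z.1 - (q m : ℝ) * z.2.1)))) :
    X 0 = 0 ∧ ∀ t : ℝ, HasDerivAt X (h (X t)) t := by
  set lam : ℕ → ℝ := fun m => r * (p m : ℝ) - (q m : ℝ) with hlam
  set g : ℕ → ℝ → ℝ := fun m t =>
    (m : ℝ) / (2 * π * ((p m : ℝ)) ^ m * lam m) * Real.sin (2 * π * lam m * t) with hg
  set g' : ℕ → ℝ → ℝ := fun m t =>
    (m : ℝ) * (((p m : ℝ)) ^ m)⁻¹ * Real.cos (2 * π * lam m * t) with hg'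
  set u : ℕ → ℝ := fun m => (m : ℝ) * (1 / 2 : ℝ) ^ m with hu
  have hsum_u : Summable u := by
    have := summable_pow_mul_geometric_of_norm_lt_one (R := ℝ) 1 (r := (1/2 : ℝ)) (by norm_num)
    simpa [hu] using this
  have hderiv : ∀ m t, HasDerivAt (g m) (g' m t) t := by
    intro m t
    have h1 : HasDerivAt (fun t : ℝ => 2 * π * lam m * t) (2 * π * lam m) t := by
      simpa using (hasDerivAt_id t).const_mul (2 * π * lam m)
    have h2 : HasDerivAt (fun t : ℝ => Real.sin (2 * π * lam m * t))
        (Real.cos (2 * π * lam m * t) * (2 * π * lam m)) t :=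
      (Real.hasDerivAt_sin _).comp t h1
    have h3 := h2.const_mul ((m : ℝ) / (2 * π * ((p m : ℝ)) ^ m * lam m))
    refine h3.congr_deriv (Eq.symm ?_)
    rcases Nat.eq_zero_or_pos m with hm | hm
    · subst hm; simp [hg']
    · have hlamne : lam m ≠ 0 := by
        have := (happrox m hm).1
        intro hz; rw [hlam] at hz; simp [hz] at this
      have hpne : ((p m : ℝ)) ^ m ≠ 0 := by
        have : (2 : ℝ) ≤ (p m : ℝ) := by exact_mod_cast hp m hm
        positivity
      rw [hg']
      field_simp
  have hbound : ∀ m t, ‖g' m t‖ ≤ u m := by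
    intro m t
    rcases Nat.eq_zero_or_pos m with hm | hm
    · subst hm; simp [hg', hu]
    · have hp2 : (2 : ℝ) ≤ (p m : ℝ) := by exact_mod_cast hp m hm
      have hppos : (0 : ℝ) < ((p m : ℝ)) ^ m := by positivity
      have h2m : (2 : ℝ) ^ m ≤ ((p m : ℝ)) ^ m :=
        pow_le_pow_left₀ (by norm_num) hp2 m
      have h2pos : (0 : ℝ) < (2 : ℝ) ^ m := by positivity
      have habs : |(m : ℝ) * (((p m : ℝ)) ^ m)⁻¹| = (m : ℝ) * (((p m : ℝ)) ^ m)⁻¹ :=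
        abs_of_nonneg (by positivity)
      calc ‖g' m t‖ ≤ (m : ℝ) * (((p m : ℝ)) ^ m)⁻¹ * 1 := by
            rw [hg', Real.norm_eq_abs, abs_mul, habs]
            exact mul_le_mul_of_nonneg_left (Real.abs_cos_le_one _) (by positivity)
        _ = (m : ℝ) * (((p m : ℝ)) ^ m)⁻¹ := mul_one _
        _ ≤ (m : ℝ) * ((2 : ℝ) ^ m)⁻¹ :=
            mul_le_mul_of_nonneg_left (inv_anti₀ h2pos h2m) (by positivity)
        _ = u m := by rw [hu]; simp [one_div, inv_pow]
  have hsum0 : Summable fun m => g m (0 : ℝ) := by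
    have : (fun m => g m (0 : ℝ)) = fun _ => (0 : ℝ) := by
      funext m; simp [hg]
    rw [this]; exact summable_zero
  have key : ∀ t : ℝ, HasDerivAt (fun s => ∑' m : ℕ, g m s) (∑' m : ℕ, g' m t) t :=
    fun t => hasDerivAt_tsum hsum_u hderiv hbound hsum0 t
  constructor
  · rw [hX 0]
    have : (∑' m : ℕ, g m (0:ℝ)) = 0 := by
      have : (fun m => g m (0 : ℝ)) = fun _ => (0 : ℝ) := by
        funext m; simp [hg]
      simp [this]
    simp only [hg, hlam] at this
    simp [this, Prod.ext_iff]
  · intro t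
    rw [hh (X t)]
    have hX1 : (X t).1 = r * t := by rw [hX t]
    have hX2 : (X t).2.1 = t := by rw [hX t]
    rw [hX1, hX2]
    have harg : (∑' m : ℕ, (m : ℝ) * (((p m : ℝ)) ^ m)⁻¹ *
        Real.cos (2 * π * ((p m : ℝ) * (r * t) - (q m : ℝ) * t))) = ∑' m : ℕ, g' m t := by
      apply tsum_congr
      intro m
      simp only [hg', hlam]
      ring_nf
    rw [harg]
    have hXeq : X = fun s => (r * s, s, ∑' m : ℕ, g m s) := by
      funext s; rw [hX s]
    rw [hXeq]
    simpa using HasDerivAt.prodMk ((hasDerivAt_id t).const_mul r) (HasDerivAt.prodMk (hasDerivAt_id t) (key t))
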